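/- Let T_D be shifted exponential with rate λ_d > 0 and shift c ≥ 0, independent of T_N(K) (the K-th order statistic of N i.i.d. shifted exponentials with rate λ_s, shift c). Then for t > c, P(T_N(K) ≥ t, T_N(K) ≤ T_D) = Σ_{j=0}^{K-1} B_{K,j}·λ_s·e^{-H_{K,j}(t-c)}/H_{K,j}, where B_{K,j} = K·binom(N,K)·binom(K-1,j)·(-1)^j and H_{K,j} = λ_s(N-K+1+j) + λ_d. -/

import Mathlib

open MeasureTheory ProbabilityTheory Real Set Filter
open scoped Classical ENNReal Topology NNReal
set_option maxHeartbeats 1000000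


/-- The shifted exponential distribution with rate `l` and shift `c`:
density `l * exp (-l*(t-c))` for `t > c`, `0` otherwise. -/
noncomputable def shiftedExp (l c : ℝ) : MeasureTheory.Measure ℝ :=
  MeasureTheory.volume.withDensity
    (fun t => ENNReal.ofReal (if c < t then l * Real.exp (-l * (t - c)) else 0))

lemma exp_int_on (l c a : ℝ) (hl : 0 < l) :
    IntegrableOn (fun u => l * Real.exp (-l * (u - c))) (Ioi a) := by
  have : (fun u => l * Real.exp (-l * (u - c)))
      = fun u => (l * Real.exp (l * c)) * Real.exp (-l * u) := by
    ext u; rw [mul_assoc, ← Real.exp_add]; ring_nf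
  rw [this]
  exact (exp_neg_integrableOn_Ioi a hl).const_mul _

lemma exp_integral_Ioi (l c a : ℝ) (hl : 0 < l) :
    ∫ u in Ioi a, l * Real.exp (-l * (u - c)) = Real.exp (-l * (a - c)) := by
  have hderiv : ∀ u ∈ Ioi a, HasDerivAt (fun u => -Real.exp (-l * (u - c)))
      (l * Real.exp (-l * (u - c))) u := by
    intro u _
    have h1 : HasDerivAt (fun u : ℝ => -l * (u - c)) (-l) u := by
      simpa using ((hasDerivAt_id u).sub_const c).const_mul (-l)
    have := (h1.exp).neg
    refine HasDerivAt.congr_deriv this ?_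
    ring
  have htend : Tendsto (fun u => -Real.exp (-l * (u - c))) atTop (𝓝 0) := by
    rw [← neg_zero]
    apply Tendsto.neg
    have h2 : Tendsto (fun u : ℝ => -l * (u - c)) atTop atBot := by
      apply Tendsto.const_mul_atTop_of_neg (neg_neg_iff_pos.2 hl)
      exact tendsto_atTop_add_const_right _ _ tendsto_id
    exact Real.tendsto_exp_atBot.comp h2
  rw [MeasureTheory.integral_Ioi_of_hasDerivAt_of_tendsto
    (Continuous.continuousWithinAt (by continuity)) hderiv (exp_int_on l c a hl) htend]
  simp

lemma shiftedExp_apply (l c : ℝ) (s : Set ℝ) (hs : MeasurableSet s) :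
    shiftedExp l c s
      = ∫⁻ u in s, ENNReal.ofReal (if c < u then l * Real.exp (-l * (u - c)) else 0) := by
  rw [shiftedExp, withDensity_apply _ hs]

lemma shiftedExp_Ioi (l c y : ℝ) (hl : 0 < l) (hy : c ≤ y) :
    shiftedExp l c (Ioi y) = ENNReal.ofReal (Real.exp (-l * (y - c))) := by
  rw [shiftedExp_apply _ _ _ measurableSet_Ioi]
  have hcongr : ∀ u ∈ Ioi y, ENNReal.ofReal (if c < u then l * Real.exp (-l * (u - c)) else 0)
      = ENNReal.ofReal (l * Real.exp (-l * (u - c))) := by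
    intro u hu
    rw [if_pos (lt_of_le_of_lt hy hu)]
  rw [setLIntegral_congr_fun measurableSet_Ioi hcongr]
  rw [← MeasureTheory.ofReal_integral_eq_lintegral_ofReal (exp_int_on l c y hl)
    (Filter.Eventually.of_forall (fun u => by positivity))]
  rw [exp_integral_Ioi l c y hl]

lemma shiftedExp_singleton (l c y : ℝ) : shiftedExp l c {y} = 0 := by
  rw [shiftedExp_apply _ _ _ (measurableSet_singleton y)]
  rw [setLIntegral_measure_zero _ _ (measure_singleton y)]

lemma shiftedExp_prob (l c : ℝ) (hl : 0 < l) : IsProbabilityMeasure (shiftedExp l c) := by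
  constructor
  have : (Set.univ : Set ℝ) = Iic c ∪ Ioi c := by
    ext u; simp [le_or_gt]
  rw [this, measure_union (by simp [Set.disjoint_left]) measurableSet_Ioi]
  have h1 : shiftedExp l c (Iic c) = 0 := by
    rw [shiftedExp_apply _ _ _ measurableSet_Iic]
    have : ∀ u ∈ Iic c, ENNReal.ofReal (if c < u then l * Real.exp (-l * (u - c)) else 0) = 0 := by
      intro u hu
      rw [if_neg (not_lt.2 hu)]
      simp
    rw [setLIntegral_congr_fun measurableSet_Iic this]
    simp
  rw [h1, shiftedExp_Ioi l c c hl le_rfl]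
  simp

lemma shiftedExp_Iic (l c y : ℝ) (hl : 0 < l) (hy : c ≤ y) :
    shiftedExp l c (Iic y) = ENNReal.ofReal (1 - Real.exp (-l * (y - c))) := by
  have := shiftedExp_prob l c hl
  have hc : Iic y = (Ioi y)ᶜ := by simp
  rw [hc, measure_compl measurableSet_Ioi (measure_ne_top _ _), measure_univ,
    shiftedExp_Ioi l c y hl hy]
  rw [ENNReal.ofReal_sub _ (le_of_lt (Real.exp_pos _)), ENNReal.ofReal_one]



variable {N K : ℕ}

/-- count of coordinates ≤ s -/
noncomputable def cnt {N : ℕ} (x : Fin N → ℝ) (s : ℝ) : ℕ :=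
  (Finset.univ.filter (fun i => x i ≤ s)).card

lemma natCard_eq_cnt (x : Fin N → ℝ) (s : ℝ) :
    Nat.card {i : Fin N // x i ≤ s} = cnt x s := by
  rw [Nat.card_eq_fintype_card, cnt]
  convert Fintype.card_subtype (fun i => x i ≤ s) using 2

lemma cnt_mono (x : Fin N → ℝ) {s u : ℝ} (h : s ≤ u) : cnt x s ≤ cnt x u := by
  apply Finset.card_le_card
  intro i hi
  simp only [Finset.mem_filter, Finset.mem_univ, true_and] at *
  linarith

noncomputable def Gstat (N K : ℕ) (x : Fin N → ℝ) : ℝ :=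
  sInf {s : ℝ | K ≤ Nat.card {i : Fin N // x i ≤ s}}

lemma Gstat_le_iff (hK : 1 ≤ K) (hKN : K ≤ N) (x : Fin N → ℝ) (y : ℝ) :
    Gstat N K x ≤ y ↔ K ≤ cnt x y := by
  have hN : 0 < N := lt_of_lt_of_le hK hKN
  have huniv : (Finset.univ : Finset (Fin N)).Nonempty := ⟨⟨0, hN⟩, Finset.mem_univ _⟩
  set S : Set ℝ := {s : ℝ | K ≤ Nat.card {i : Fin N // x i ≤ s}} with hS
  have hmem : ∀ s, s ∈ S ↔ K ≤ cnt x s := by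
    intro s; simp only [hS, Set.mem_setOf_eq, natCard_eq_cnt]
  have hne : S.Nonempty := by
    refine ⟨Finset.univ.sup' huniv x, ?_⟩
    rw [hmem]
    have : Finset.univ.filter (fun i => x i ≤ Finset.univ.sup' huniv x) = Finset.univ := by
      apply Finset.eq_univ_iff_forall.2
      intro i
      simp only [Finset.mem_filter, Finset.mem_univ, true_and]
      exact Finset.le_sup' x (Finset.mem_univ i)
    rw [cnt, this, Finset.card_univ, Fintype.card_fin]
    exact hKN
  have hbdd : BddBelow S := by
    refine ⟨Finset.univ.inf' huniv x, ?_⟩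
    intro s hs
    rw [hmem] at hs
    have hpos : 0 < cnt x s := lt_of_lt_of_le hK hs
    rw [cnt, Finset.card_pos] at hpos
    obtain ⟨i, hi⟩ := hpos
    simp only [Finset.mem_filter, Finset.mem_univ, true_and] at hi
    exact le_trans (Finset.inf'_le x (Finset.mem_univ i)) hi
  have hup : ∀ s ∈ S, ∀ u, s ≤ u → u ∈ S := by
    intro s hs u hsu
    rw [hmem] at *
    exact le_trans hs (cnt_mono x hsu)
  have hinf : Gstat N K x ∈ S := by
    by_contra hno
    set g := Gstat N K x with hg
    have hgt : ∀ s ∈ S, g < s := by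
      intro s hs
      rcases lt_or_eq_of_le (csInf_le hbdd hs) with h | h
      · exact h
      · rw [← h] at hs; exact absurd hs hno
    by_cases hbad : (Finset.univ.filter (fun i => g < x i)).Nonempty
    · set m := (Finset.univ.filter (fun i => g < x i)).inf' hbad x with hm
      have hgm : g < m := by
        rw [hm, Finset.lt_inf'_iff]
        intro i hi
        exact (Finset.mem_filter.1 hi).2
      obtain ⟨s, hsS, hsm⟩ := exists_lt_of_csInf_lt hne hgm
      have hsub : Finset.univ.filter (fun i => x i ≤ s) ⊆
          Finset.univ.filter (fun i => x i ≤ g) := by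
        intro i hi
        simp only [Finset.mem_filter, Finset.mem_univ, true_and] at *
        by_contra hig
        push_neg at hig
        have hiB : i ∈ Finset.univ.filter (fun i => g < x i) := by
          simp only [Finset.mem_filter, Finset.mem_univ, true_and]; exact hig
        have h2 : m ≤ x i := Finset.inf'_le x hiB
        linarith
      have : K ≤ cnt x g := le_trans ((hmem s).1 hsS) (Finset.card_le_card hsub)
      exact hno ((hmem g).2 this)
    · rw [Finset.not_nonempty_iff_eq_empty, Finset.filter_eq_empty_iff] at hbad
      have : Finset.univ.filter (fun i => x i ≤ g) = Finset.univ := by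
        apply Finset.eq_univ_iff_forall.2
        intro i
        simp only [Finset.mem_filter, Finset.mem_univ, true_and]
        have := hbad (Finset.mem_univ i)
        push_neg at this
        exact this
      have : K ≤ cnt x g := by
        rw [cnt, this, Finset.card_univ, Fintype.card_fin]; exact hKN
      exact hno ((hmem g).2 this)
  constructor
  · intro h
    rw [← hmem]
    exact hup _ hinf _ h
  · intro h
    exact csInf_le hbdd ((hmem y).2 h)



variable {N K : ℕ}



lemma cnt_set_eq (y : ℝ) :
    {x : Fin N → ℝ | K ≤ cnt x y}
      = ⋃ S ∈ Finset.univ.filter (fun S : Finset (Fin N) => K ≤ S.card),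
          Set.pi Set.univ (fun i => if i ∈ S then Iic y else Ioi y) := by
  ext x
  simp only [Set.mem_setOf_eq, Set.mem_iUnion, Finset.mem_filter, Finset.mem_univ, true_and,
    Set.mem_pi, Set.mem_Iic, Set.mem_Ioi]
  constructor
  · intro h
    refine ⟨Finset.univ.filter (fun i => x i ≤ y), h, ?_⟩
    intro i _
    by_cases hxi : x i ≤ y
    · simp [hxi]
    · simp only [Finset.mem_filter, Finset.mem_univ, true_and, hxi, if_false]
      push_neg at hxi
      exact hxi
  · rintro ⟨S, hScard, hS⟩
    have : S ⊆ Finset.univ.filter (fun i => x i ≤ y) := by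
      intro i hi
      have := hS i (Set.mem_univ i)
      rw [if_pos hi] at this
      simp only [Finset.mem_filter, Finset.mem_univ, true_and]
      exact this
    exact le_trans hScard (Finset.card_le_card this)

lemma cnt_set_measurable (y : ℝ) : MeasurableSet {x : Fin N → ℝ | K ≤ cnt x y} := by
  rw [cnt_set_eq]
  refine Set.Finite.measurableSet_biUnion (Set.toFinite _) ?_
  intro S _
  exact MeasurableSet.pi (Set.countable_univ) (fun i _ => by
    by_cases h : i ∈ S <;> simp [h, measurableSet_Iic, measurableSet_Ioi])

lemma pi_cnt_measure (μ1 : Measure ℝ) [IsProbabilityMeasure μ1] (y : ℝ) :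
    Measure.pi (fun _ : Fin N => μ1) {x | K ≤ cnt x y}
      = ∑ m ∈ Finset.Icc K N,
          (N.choose m : ℝ≥0∞) * (μ1 (Iic y))^m * (μ1 (Ioi y))^(N-m) := by
  rw [cnt_set_eq]
  rw [measure_biUnion_finset ?hd ?hm]
  case hm =>
    intro S _
    exact MeasurableSet.pi (Set.countable_univ) (fun i _ => by
      by_cases h : i ∈ S <;> simp [h, measurableSet_Iic, measurableSet_Ioi])
  case hd =>
    intro S hS S' hS' hne
    simp only [Function.onFun]
    rw [Set.disjoint_left]
    intro x hx hx'
    apply hne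
    ext i
    have h1 := hx i (Set.mem_univ i)
    have h2 := hx' i (Set.mem_univ i)
    simp only at h1 h2
    constructor
    · intro hi
      rw [if_pos hi] at h1
      by_contra hi'
      rw [if_neg hi'] at h2
      simp only [Set.mem_Iic, Set.mem_Ioi] at h1 h2
      linarith
    · intro hi'
      rw [if_pos hi'] at h2
      by_contra hi
      rw [if_neg hi] at h1
      simp only [Set.mem_Iic, Set.mem_Ioi] at h1 h2
      linarith
  -- now compute each measure and regroup
  have hmeas : ∀ S : Finset (Fin N),
      Measure.pi (fun _ : Fin N => μ1) (Set.pi Set.univ (fun i => if i ∈ S then Iic y else Ioi y))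
        = (μ1 (Iic y))^S.card * (μ1 (Ioi y))^(N - S.card) := by
    intro S
    rw [Measure.pi_pi]
    rw [← Finset.prod_sdiff (Finset.subset_univ S)]
    have e1 : ∀ i ∈ Finset.univ \ S, μ1 (if i ∈ S then Iic y else Ioi y) = μ1 (Ioi y) := by
      intro i hi
      rw [Finset.mem_sdiff] at hi
      rw [if_neg hi.2]
    have e2 : ∀ i ∈ S, μ1 (if i ∈ S then Iic y else Ioi y) = μ1 (Iic y) := by
      intro i hi
      rw [if_pos hi]
    rw [Finset.prod_congr rfl e1, Finset.prod_congr rfl e2, Finset.prod_const, Finset.prod_const,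
      Finset.card_sdiff_of_subset (Finset.subset_univ S), Finset.card_univ, Fintype.card_fin, mul_comm]
  have hgrp : Finset.univ.filter (fun S : Finset (Fin N) => K ≤ S.card)
      = (Finset.Icc K N).biUnion (fun m => Finset.powersetCard m Finset.univ) := by
    ext S
    simp only [Finset.mem_filter, Finset.mem_univ, true_and, Finset.mem_biUnion,
      Finset.mem_Icc, Finset.mem_powersetCard]
    constructor
    · intro h
      exact ⟨S.card, ⟨h, by simpa using Finset.card_le_card (Finset.subset_univ S)⟩,
        Finset.subset_univ S, rfl⟩
    · rintro ⟨m, ⟨hm, _⟩, _, rfl⟩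
      exact hm
  rw [Finset.sum_congr rfl (fun S _ => hmeas S), hgrp, Finset.sum_biUnion ?hdisj]
  case hdisj =>
    intro m hm m' hm' hne
    simp only [Function.onFun]
    rw [Finset.disjoint_left]
    intro S hS hS'
    rw [Finset.mem_powersetCard] at hS hS'
    exact hne (hS.2 ▸ hS'.2 ▸ rfl)
  apply Finset.sum_congr rfl
  intro m hm
  rw [Finset.mem_Icc] at hm
  have : ∀ S ∈ Finset.powersetCard m (Finset.univ : Finset (Fin N)),
      (μ1 (Iic y))^S.card * (μ1 (Ioi y))^(N - S.card)
        = (μ1 (Iic y))^m * (μ1 (Ioi y))^(N - m) := by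
    intro S hS
    rw [Finset.mem_powersetCard] at hS
    rw [hS.2]
  rw [Finset.sum_congr rfl this, Finset.sum_const, Finset.card_powersetCard, Finset.card_univ,
    Fintype.card_fin, nsmul_eq_mul, mul_assoc]



noncomputable def phi (N K : ℕ) (ls c : ℝ) (y : ℝ) : ℝ :=
  ∑ m ∈ Finset.Icc K N,
    (N.choose m : ℝ) * (1 - Real.exp (-ls * (y - c)))^m * (Real.exp (-ls * (y - c)))^(N - m)

lemma phi_hasDeriv (N K : ℕ) (hK : 1 ≤ K) (hKN : K ≤ N) (ls c : ℝ) (u : ℝ) :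
    HasDerivAt (phi N K ls c)
      ((K : ℝ) * (N.choose K : ℝ) * (1 - Real.exp (-ls * (u - c)))^(K - 1)
        * (Real.exp (-ls * (u - c)))^(N - K + 1) * ls) u := by
  set E : ℝ → ℝ := fun u => Real.exp (-ls * (u - c)) with hE
  have hEd : HasDerivAt E (-ls * E u) u := by
    have h1 : HasDerivAt (fun u : ℝ => -ls * (u - c)) (-ls) u := by
      simpa using ((hasDerivAt_id u).sub_const c).const_mul (-ls)
    have := h1.exp
    simpa [hE, mul_comm] using this
  have hpd : HasDerivAt (fun u => 1 - E u) (ls * E u) u := by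
    have := hEd.const_sub 1
    simpa using this
  set p : ℝ := 1 - E u with hp
  set a : ℕ → ℝ := fun m => (N.choose m : ℝ) * m * p^(m - 1) * (E u)^(N - m + 1) * ls
    with ha
  have hterm : ∀ m ∈ Finset.Icc K N, HasDerivAt
      (fun y => (N.choose m : ℝ) * ((1 - E y)^m * (E y)^(N - m))) (a m - a (m + 1)) u := by
    intro m hm
    rw [Finset.mem_Icc] at hm
    have h := ((hpd.pow m).mul (hEd.pow (N - m))).const_mul (N.choose m : ℝ)
    have harith : (N.choose m : ℝ) * ((m : ℝ) * (1 - E u)^(m-1) * (ls * E u) * (E u)^(N-m)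
        + (1 - E u)^m * (((N - m : ℕ) : ℝ) * (E u)^(N - m - 1) * (-ls * E u)))
        = a m - a (m + 1) := by
      rcases eq_or_lt_of_le hm.2 with hNm | hNm
      · subst hNm
        simp only [ha, Nat.sub_self, pow_zero, Nat.choose_succ_self, Nat.cast_zero, ← hp]
        ring
      · obtain ⟨d, hd⟩ : ∃ d, N - m = d + 1 := ⟨N - m - 1, by omega⟩
        have hc1 : N - m - 1 = d := by omega
        have hc2 : N - m + 1 = d + 2 := by omega
        have hc3 : N - (m + 1) + 1 = d + 1 := by omega
        have hc4 : (m + 1) - 1 = m := by omega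
        have hcast : ((N - m : ℕ) : ℝ) = (d : ℝ) + 1 := by rw [hd]; push_cast; ring
        have hch : (N.choose (m+1) : ℝ) * ((m : ℝ) + 1) = (N.choose m : ℝ) * ((d : ℝ) + 1) := by
          have h0 := Nat.choose_succ_right_eq N m
          rw [hd] at h0
          exact_mod_cast congrArg (Nat.cast : ℕ → ℝ) h0
        simp only [hc1, hc2, hc3, hc4, hcast]
        simp only [ha, ← hp, Nat.cast_add, Nat.cast_one]
        simp only [hd, hc2, hc3, hc4]
        rw [show (N.choose (m+1) : ℝ) * ((m : ℝ) + 1) * p^m * (E u)^(d+1) * ls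
            = ((N.choose (m+1) : ℝ) * ((m : ℝ) + 1)) * (p^m * (E u)^(d+1) * ls) by ring, hch]
        ring
    rw [← harith]
    exact h
  have hphi : phi N K ls c = fun y => ∑ m ∈ Finset.Icc K N,
      (N.choose m : ℝ) * ((1 - E y)^m * (E y)^(N - m)) := by
    funext y
    simp only [phi, hE, mul_assoc]
  rw [hphi]
  have hsum := HasDerivAt.fun_sum hterm
  have hval : ∑ m ∈ Finset.Icc K N, (a m - a (m + 1)) = a K := by
    rw [← Finset.Ico_add_one_right_eq_Icc, Finset.sum_Ico_eq_sum_range]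
    have : ∀ i, a (K + i + 1) = a (K + (i + 1)) := by intro i; rw [Nat.add_assoc]
    calc ∑ i ∈ Finset.range (N + 1 - K), (a (K + i) - a (K + i + 1))
        = ∑ i ∈ Finset.range (N + 1 - K), ((fun j => a (K + j)) i - (fun j => a (K + j)) (i+1)) := by
          apply Finset.sum_congr rfl; intro i _; rw [this]
      _ = a (K + 0) - a (K + (N + 1 - K)) := Finset.sum_range_sub' (fun j => a (K + j)) _
      _ = a K := by
          rw [Nat.add_zero, show K + (N + 1 - K) = N + 1 by omega]
          simp [ha, Nat.choose_succ_self]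
  rw [hval] at hsum
  refine HasDerivAt.congr_deriv hsum ?_
  simp only [ha, ← hp]
  ring

section Analytic

variable {N K : ℕ} {ls ld c t : ℝ}

lemma expansion (hK : 1 ≤ K) (hKN : K ≤ N) (hls : 0 < ls) (u : ℝ) :
    ∑ j ∈ Finset.range K, ((K : ℝ) * (N.choose K : ℝ) * ((K - 1).choose j : ℝ) * (-1) ^ j)
        * ls * Real.exp (-(ls * ((N : ℝ) - K + 1 + j) + ld) * (u - c))
      = Real.exp (-ld * (u - c)) * ((K : ℝ) * (N.choose K : ℝ)
          * (1 - Real.exp (-ls * (u - c)))^(K - 1)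
          * (Real.exp (-ls * (u - c)))^(N - K + 1) * ls) := by
  set E : ℝ := Real.exp (-ls * (u - c)) with hE
  have hbin : (1 - E)^(K - 1)
      = ∑ j ∈ Finset.range K, (-1 : ℝ)^j * E^j * ((K-1).choose j : ℝ) := by
    have h := add_pow (-E) (1 : ℝ) (K - 1)
    rw [show K - 1 + 1 = K from by omega] at h
    rw [show (1 : ℝ) - E = -E + 1 by ring, h]
    apply Finset.sum_congr rfl
    intro j _
    rw [neg_pow]
    ring
  have hexp : ∀ j ∈ Finset.range K,
      Real.exp (-(ls * ((N : ℝ) - K + 1 + j) + ld) * (u - c))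
        = E ^ (N - K + 1 + j) * Real.exp (-ld * (u - c)) := by
    intro j _
    have hcast : ((N - K + 1 + j : ℕ) : ℝ) = (N : ℝ) - K + 1 + j := by
      push_cast [Nat.cast_sub hKN]; ring
    rw [hE, ← Real.exp_nat_mul, ← Real.exp_add, hcast]
    congr 1
    ring
  rw [Finset.sum_congr rfl (fun j hj => by rw [hexp j hj])]
  rw [hbin, Finset.mul_sum]
  rw [Finset.sum_congr rfl (fun j hj => by rw [pow_add] : ∀ j ∈ Finset.range K,
    ((K : ℝ) * (N.choose K : ℝ) * ((K - 1).choose j : ℝ) * (-1) ^ j) * ls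
      * (E ^ (N - K + 1 + j) * Real.exp (-ld * (u - c)))
    = ((K : ℝ) * (N.choose K : ℝ) * ((K - 1).choose j : ℝ) * (-1) ^ j) * ls
      * (E ^ (N - K + 1) * E ^ j * Real.exp (-ld * (u - c))))]
  rw [Finset.sum_mul, Finset.sum_mul, Finset.mul_sum]
  apply Finset.sum_congr rfl
  intro j _
  ring

end Analytic

section MainIntegral

variable {N K : ℕ} {ls ld c t : ℝ}


lemma exp_shift_deriv (b c : ℝ) (u : ℝ) :
    HasDerivAt (fun u => Real.exp (-b * (u - c))) (-b * Real.exp (-b * (u - c))) u := by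
  have h1 : HasDerivAt (fun u : ℝ => -b * (u - c)) (-b) u := by
    simpa using ((hasDerivAt_id u).sub_const c).const_mul (-b)
  simpa [mul_comm] using h1.exp

lemma exp_shift_tendsto {b : ℝ} (c : ℝ) (hb : 0 < b) :
    Filter.Tendsto (fun u => Real.exp (-b * (u - c))) Filter.atTop (nhds 0) := by
  have h2 : Filter.Tendsto (fun u : ℝ => -b * (u - c)) Filter.atTop Filter.atBot := by
    apply Filter.Tendsto.const_mul_atTop_of_neg (neg_neg_iff_pos.2 hb)
    exact Filter.tendsto_atTop_add_const_right _ _ Filter.tendsto_id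
  exact Real.tendsto_exp_atBot.comp h2

lemma phi_abs_le (hls : 0 < ls) {u : ℝ} (hu : c ≤ u) :
    |phi N K ls c u| ≤ ∑ m ∈ Finset.Icc K N, (N.choose m : ℝ) := by
  have hE0 : 0 < Real.exp (-ls * (u - c)) := Real.exp_pos _
  have hE1 : Real.exp (-ls * (u - c)) ≤ 1 := by
    rw [Real.exp_le_one_iff]
    nlinarith
  refine le_trans (Finset.abs_sum_le_sum_abs _ _) (Finset.sum_le_sum ?_)
  intro m _
  rw [abs_of_nonneg (mul_nonneg (mul_nonneg (by positivity)
    (pow_nonneg (by linarith) m)) (by positivity))]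
  calc (N.choose m : ℝ) * (1 - Real.exp (-ls * (u - c)))^m * (Real.exp (-ls * (u - c)))^(N - m)
      ≤ (N.choose m : ℝ) * 1 * 1 := by
        apply mul_le_mul
        · apply mul_le_mul_of_nonneg_left _ (by positivity)
          exact pow_le_one₀ (by linarith) (by linarith)
        · exact pow_le_one₀ (by positivity) hE1
        · positivity
        · positivity
    _ = (N.choose m : ℝ) := by ring

lemma main_integral (hK : 1 ≤ K) (hKN : K ≤ N) (hls : 0 < ls) (hld : 0 < ld) (ht : c < t) :
    ∫ u in Set.Ioi t, ld * Real.exp (-ld * (u - c)) * (phi N K ls c u - phi N K ls c t)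
      = ∑ j ∈ Finset.range K,
          ((K : ℝ) * (N.choose K : ℝ) * ((K - 1).choose j : ℝ) * (-1) ^ j)
            * ls * Real.exp (-(ls * ((N : ℝ) - K + 1 + j) + ld) * (t - c))
            / (ls * ((N : ℝ) - K + 1 + j) + ld) := by
  set H : ℕ → ℝ := fun j => ls * ((N : ℝ) - K + 1 + j) + ld with hH
  set B : ℕ → ℝ := fun j => (K : ℝ) * (N.choose K : ℝ) * ((K - 1).choose j : ℝ) * (-1) ^ j
    with hB
  have hHpos : ∀ j, 0 < H j := by
    intro j
    have h1 : (1 : ℝ) ≤ (N : ℝ) - K + 1 + j := by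
      have h2 : (K : ℝ) ≤ N := by exact_mod_cast hKN
      have h3 : (0 : ℝ) ≤ j := Nat.cast_nonneg j
      nlinarith
    simp only [hH]
    nlinarith
  set A : ℝ → ℝ := fun u => -(Real.exp (-ld * (u - c)) * (phi N K ls c u - phi N K ls c t))
      - ∑ j ∈ Finset.range K, B j * ls * Real.exp (-(H j) * (u - c)) / H j with hA
  have hAderiv : ∀ u, HasDerivAt A
      (ld * Real.exp (-ld * (u - c)) * (phi N K ls c u - phi N K ls c t)) u := by
    intro u
    have h1 := ((exp_shift_deriv ld c u).mul
      ((phi_hasDeriv N K hK hKN ls c u).sub_const (phi N K ls c t))).neg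
    have h2 : ∀ j ∈ Finset.range K, HasDerivAt
        (fun u => B j * ls * Real.exp (-(H j) * (u - c)) / H j)
        (-(B j * ls * Real.exp (-(H j) * (u - c)))) u := by
      intro j _
      have hd := ((exp_shift_deriv (H j) c u).const_mul (B j * ls)).div_const (H j)
      refine HasDerivAt.congr_deriv hd ?_
      field_simp [(hHpos j).ne']
    have h2s := HasDerivAt.fun_sum h2
    have := h1.sub h2s
    refine HasDerivAt.congr_deriv this ?_
    have hexpand := expansion (ld := ld) (c := c) hK hKN hls u
    rw [hB, hH] at *
    simp only [Finset.sum_neg_distrib]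
    rw [← hexpand]
    ring
  have hphil : ∃ L, Filter.Tendsto (phi N K ls c) Filter.atTop (nhds L) := by
    refine ⟨∑ m ∈ Finset.Icc K N, (N.choose m : ℝ) * (1 - 0)^m * (0 : ℝ)^(N - m), ?_⟩
    apply tendsto_finset_sum
    intro m _
    exact (((tendsto_const_nhds.sub (exp_shift_tendsto c hls)).pow m).const_mul _).mul
      ((exp_shift_tendsto c hls).pow (N - m))
  obtain ⟨L, hL⟩ := hphil
  have hAtend : Filter.Tendsto A Filter.atTop (nhds 0) := by
    have hb1 : Filter.Tendsto
        (fun u => -(Real.exp (-ld * (u - c)) * (phi N K ls c u - phi N K ls c t)))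
        Filter.atTop (nhds (-(0 * (L - phi N K ls c t)))) :=
      ((exp_shift_tendsto c hld).mul (hL.sub_const _)).neg
    have hb2 : Filter.Tendsto
        (fun u => ∑ j ∈ Finset.range K, B j * ls * Real.exp (-(H j) * (u - c)) / H j)
        Filter.atTop (nhds (∑ j ∈ Finset.range K, (0 : ℝ))) := by
      apply tendsto_finset_sum
      intro j _
      have := ((exp_shift_tendsto c (hHpos j)).const_mul (B j * ls)).div_const (H j)
      simpa using this
    have hcomb := hb1.sub hb2
    have h0 : (0 : ℝ) = -(0 * (L - phi N K ls c t)) - ∑ _j ∈ Finset.range K, (0 : ℝ) := by simp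
    rw [hA, h0]
    exact hcomb
  have hphicont : Continuous (phi N K ls c) :=
    continuous_iff_continuousAt.2 fun u => (phi_hasDeriv N K hK hKN ls c u).continuousAt
  have hInt : MeasureTheory.IntegrableOn
      (fun u => ld * Real.exp (-ld * (u - c)) * (phi N K ls c u - phi N K ls c t))
      (Set.Ioi t) := by
    set M : ℝ := ∑ m ∈ Finset.Icc K N, (N.choose m : ℝ) with hM
    apply MeasureTheory.Integrable.mono'
      ((exp_int_on ld c t hld).const_mul (M + M))
    · exact (((continuous_const.mul
        (Real.continuous_exp.comp (by continuity))).mul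
        (hphicont.sub continuous_const))).aestronglyMeasurable
    · filter_upwards [MeasureTheory.ae_restrict_mem measurableSet_Ioi] with u hu
      have hu' : c ≤ u := le_trans (le_of_lt ht) (le_of_lt hu)
      have h1 : |phi N K ls c u| ≤ M := phi_abs_le hls hu'
      have h2 : |phi N K ls c t| ≤ M := phi_abs_le hls (le_of_lt ht)
      have hE0 : 0 < Real.exp (-ld * (u - c)) := Real.exp_pos _
      rw [Real.norm_eq_abs, abs_mul, abs_mul, abs_of_nonneg (le_of_lt hld),
        abs_of_nonneg (le_of_lt hE0)]
      have h3 : |phi N K ls c u - phi N K ls c t| ≤ M + M := by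
        calc |phi N K ls c u - phi N K ls c t| ≤ |phi N K ls c u| + |phi N K ls c t| :=
          abs_sub _ _ -- may need rename
        _ ≤ M + M := add_le_add h1 h2
      calc ld * Real.exp (-ld * (u - c)) * |phi N K ls c u - phi N K ls c t|
          ≤ ld * Real.exp (-ld * (u - c)) * (M + M) := by
            apply mul_le_mul_of_nonneg_left h3 (by positivity)
        _ = (M + M) * (ld * Real.exp (-ld * (u - c))) := by ring
  have := MeasureTheory.integral_Ioi_of_hasDerivAt_of_tendsto'
    (fun u _ => hAderiv u) hInt hAtend
  rw [this]
  rw [hA]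
  simp only [sub_self, mul_zero, neg_zero, zero_sub, neg_neg, zero_add]
  rfl


section Bridge

variable {N K : ℕ} {ls ld c t : ℝ}

lemma phi_nonneg (hls : 0 < ls) {y : ℝ} (hy : c ≤ y) : 0 ≤ phi N K ls c y := by
  have hE1 : Real.exp (-ls * (y - c)) ≤ 1 := by
    rw [Real.exp_le_one_iff]; nlinarith
  apply Finset.sum_nonneg
  intro m _
  have : (0:ℝ) ≤ 1 - Real.exp (-ls * (y - c)) := by linarith
  positivity

lemma phi_cont (N K : ℕ) (hK : 1 ≤ K) (hKN : K ≤ N) (ls c : ℝ) :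
    Continuous (phi N K ls c) :=
  continuous_iff_continuousAt.2 fun u => (phi_hasDeriv N K hK hKN ls c u).continuousAt

lemma phi_cdf (hK : 1 ≤ K) (hKN : K ≤ N) (hls : 0 < ls) {y : ℝ} (hy : c ≤ y) :
    Measure.pi (fun _ : Fin N => shiftedExp ls c) {x : Fin N → ℝ | K ≤ cnt x y}
      = ENNReal.ofReal (phi N K ls c y) := by
  haveI := shiftedExp_prob ls c hls
  rw [pi_cnt_measure (shiftedExp ls c) y, shiftedExp_Iic ls c y hls hy,
    shiftedExp_Ioi ls c y hls hy]
  have hE1 : Real.exp (-ls * (y - c)) ≤ 1 := by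
    rw [Real.exp_le_one_iff]; nlinarith
  have hp0 : (0:ℝ) ≤ 1 - Real.exp (-ls * (y - c)) := by linarith
  rw [phi, ENNReal.ofReal_sum_of_nonneg (fun m _ => by positivity)]
  apply Finset.sum_congr rfl
  intro m _
  rw [ENNReal.ofReal_mul (by positivity), ENNReal.ofReal_mul (by positivity),
    ENNReal.ofReal_pow hp0, ENNReal.ofReal_pow (by positivity), ENNReal.ofReal_natCast]

lemma integrand_integrable (hK : 1 ≤ K) (hKN : K ≤ N) (hls : 0 < ls) (hld : 0 < ld)
    (ht : c < t) :
    MeasureTheory.IntegrableOn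
      (fun u => ld * Real.exp (-ld * (u - c)) * (phi N K ls c u - phi N K ls c t))
      (Set.Ioi t) := by
  set M : ℝ := ∑ m ∈ Finset.Icc K N, (N.choose m : ℝ) with hM
  apply MeasureTheory.Integrable.mono'
    ((exp_int_on ld c t hld).const_mul (M + M))
  · exact (((continuous_const.mul
      (Real.continuous_exp.comp (by continuity))).mul
      ((phi_cont N K hK hKN ls c).sub continuous_const))).aestronglyMeasurable
  · filter_upwards [MeasureTheory.ae_restrict_mem measurableSet_Ioi] with u hu
    have hu' : c ≤ u := le_trans (le_of_lt ht) (le_of_lt hu)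
    have h1 : |phi N K ls c u| ≤ M := phi_abs_le hls hu'
    have h2 : |phi N K ls c t| ≤ M := phi_abs_le hls (le_of_lt ht)
    have hE0 : 0 < Real.exp (-ld * (u - c)) := Real.exp_pos _
    rw [Real.norm_eq_abs, abs_mul, abs_mul, abs_of_nonneg (le_of_lt hld),
      abs_of_nonneg (le_of_lt hE0)]
    have h3 : |phi N K ls c u - phi N K ls c t| ≤ M + M :=
      le_trans (abs_sub _ _) (add_le_add h1 h2)
    calc ld * Real.exp (-ld * (u - c)) * |phi N K ls c u - phi N K ls c t|
        ≤ ld * Real.exp (-ld * (u - c)) * (M + M) := by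
          apply mul_le_mul_of_nonneg_left h3 (by positivity)
      _ = (M + M) * (ld * Real.exp (-ld * (u - c))) := by ring

end Bridge

/-- The `K`-th order statistic (K-th smallest value) of the family `T` evaluated at `ω`. -/
noncomputable def orderStat {Ω : Type*} {N : ℕ} (T : Fin N → Ω → ℝ) (K : ℕ) (ω : Ω) : ℝ :=
  sInf {x : ℝ | K ≤ Nat.card {i : Fin N // T i ω ≤ x}}

theorem prob_orderStat_tail_and_le_random_deadline
    {Ω : Type*} [MeasurableSpace Ω] (P : MeasureTheory.Measure Ω) [IsProbabilityMeasure P]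
    (N K : ℕ) (hK : 1 ≤ K) (hKN : K ≤ N)
    (ls ld c t : ℝ) (hls : 0 < ls) (hld : 0 < ld) (hc : 0 ≤ c) (ht : c < t)
    (T : Fin N → Ω → ℝ) (hT : ∀ i, Measurable (T i))
    (D : Ω → ℝ) (hD : Measurable D)
    (hlaw : MeasureTheory.Measure.map (fun ω => (D ω, fun i => T i ω)) P
      = (shiftedExp ld c).prod (MeasureTheory.Measure.pi (fun _ : Fin N => shiftedExp ls c))) :
    (P {ω | t ≤ orderStat T K ω ∧ orderStat T K ω ≤ D ω}).toReal
      = ∑ j ∈ Finset.range K,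
          ((K : ℝ) * (N.choose K : ℝ) * ((K - 1).choose j : ℝ) * (-1) ^ j)
            * ls * Real.exp (-(ls * ((N : ℝ) - K + 1 + j) + ld) * (t - c))
            / (ls * ((N : ℝ) - K + 1 + j) + ld) := by
  haveI hPd : IsProbabilityMeasure (shiftedExp ld c) := shiftedExp_prob ld c hld
  haveI hPs : IsProbabilityMeasure (shiftedExp ls c) := shiftedExp_prob ls c hls
  set μT := Measure.pi (fun _ : Fin N => shiftedExp ls c) with hμT
  haveI : IsProbabilityMeasure μT := inferInstance
  -- measurability of the order statistic functional
  have hGle : ∀ y : ℝ, {x : Fin N → ℝ | Gstat N K x ≤ y} = {x | K ≤ cnt x y} := by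
    intro y
    ext x
    exact Gstat_le_iff hK hKN x y
  have hGm : Measurable (Gstat N K) := by
    apply measurable_of_Iic
    intro y
    have h : Gstat N K ⁻¹' (Iic y) = {x : Fin N → ℝ | K ≤ cnt x y} := by
      rw [← hGle]; rfl
    rw [h]
    exact cnt_set_measurable y
  set S : Set (ℝ × (Fin N → ℝ)) := {q | t ≤ Gstat N K q.2 ∧ Gstat N K q.2 ≤ q.1} with hS
  have hSm : MeasurableSet S := by
    apply MeasurableSet.inter
    · exact (hGm.comp measurable_snd) measurableSet_Ici
    · exact measurableSet_le (hGm.comp measurable_snd) measurable_fst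
  have hfm : Measurable (fun ω => (D ω, fun i => T i ω)) :=
    hD.prodMk (measurable_pi_lambda _ hT)
  have hPE : P {ω | t ≤ orderStat T K ω ∧ orderStat T K ω ≤ D ω}
      = ((shiftedExp ld c).prod μT) S := by
    rw [← hlaw, Measure.map_apply hfm hSm]
    rfl
  -- cdf of the order statistic
  have hcdf : ∀ y : ℝ, c ≤ y →
      μT {x : Fin N → ℝ | Gstat N K x ≤ y} = ENNReal.ofReal (phi N K ls c y) := by
    intro y hy
    rw [hGle y, hμT]
    exact phi_cdf hK hKN hls hy
  -- measure of the strict event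
  have hlt : μT {x : Fin N → ℝ | Gstat N K x < t} = ENNReal.ofReal (phi N K ls c t) := by
    apply le_antisymm
    · calc μT {x : Fin N → ℝ | Gstat N K x < t}
          ≤ μT {x : Fin N → ℝ | Gstat N K x ≤ t} :=
            measure_mono (fun x hx => (le_of_lt (hx : Gstat N K x < t) : Gstat N K x ≤ t))
        _ = ENNReal.ofReal (phi N K ls c t) := hcdf t (le_of_lt ht)
    · set y : ℕ → ℝ := fun n => t - (t - c) * (1 / ((n : ℝ) + 1)) with hy
      have hyc : ∀ n, c ≤ y n := by
        intro n
        have h1 : (1 : ℝ) ≤ (n : ℝ) + 1 := by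
          have := Nat.cast_nonneg (α := ℝ) n; linarith
        have h2 : (t - c) * (1 / ((n : ℝ) + 1)) ≤ (t - c) * 1 := by
          apply mul_le_mul_of_nonneg_left _ (by linarith)
          rw [div_le_one (by linarith)]; linarith
        simp only [hy]; nlinarith
      have hylt : ∀ n, y n < t := by
        intro n
        have h1 : (0 : ℝ) < (n : ℝ) + 1 := by positivity
        have h2 : 0 < (t - c) * (1 / ((n : ℝ) + 1)) :=
          mul_pos (by linarith) (by positivity)
        simp only [hy]; linarith
      have hytend : Filter.Tendsto y Filter.atTop (nhds t) := by
        have h0 : Filter.Tendsto (fun n : ℕ => 1 / ((n : ℝ) + 1)) Filter.atTop (nhds 0) :=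
          tendsto_one_div_add_atTop_nhds_zero_nat
        have h1 := (h0.const_mul (t - c)).const_sub t
        simp only [hy]
        simpa using h1
      have htd : Filter.Tendsto (fun n => ENNReal.ofReal (phi N K ls c (y n)))
          Filter.atTop (nhds (ENNReal.ofReal (phi N K ls c t))) :=
        (ENNReal.continuous_ofReal.tendsto _).comp
          (((phi_cont N K hK hKN ls c).tendsto t).comp hytend)
      apply le_of_tendsto' htd
      intro n
      calc ENNReal.ofReal (phi N K ls c (y n))
          = μT {x : Fin N → ℝ | Gstat N K x ≤ y n} := (hcdf (y n) (hyc n)).symm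
        _ ≤ μT {x : Fin N → ℝ | Gstat N K x < t} :=
            measure_mono (fun x hx => lt_of_le_of_lt hx (hylt n))
  have hmono_phi : ∀ d, t ≤ d → phi N K ls c t ≤ phi N K ls c d := by
    intro d hd
    have h1 := hcdf t (le_of_lt ht)
    have h2 := hcdf d (le_trans (le_of_lt ht) hd)
    have h3 : μT {x : Fin N → ℝ | Gstat N K x ≤ t} ≤ μT {x : Fin N → ℝ | Gstat N K x ≤ d} :=
      measure_mono (fun x hx => le_trans hx hd)
    rw [h1, h2] at h3
    exact (ENNReal.ofReal_le_ofReal_iff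
      (phi_nonneg hls (le_trans (le_of_lt ht) hd))).1 h3
  -- the inner measure
  have hinner : ∀ d : ℝ, μT (Prod.mk d ⁻¹' S)
      = if t ≤ d then ENNReal.ofReal (phi N K ls c d - phi N K ls c t) else 0 := by
    intro d
    have hpre : Prod.mk d ⁻¹' S = {x : Fin N → ℝ | t ≤ Gstat N K x ∧ Gstat N K x ≤ d} := rfl
    rw [hpre]
    by_cases hd : t ≤ d
    · rw [if_pos hd]
      have hseteq : {x : Fin N → ℝ | t ≤ Gstat N K x ∧ Gstat N K x ≤ d}
          = {x : Fin N → ℝ | Gstat N K x ≤ d} \ {x : Fin N → ℝ | Gstat N K x < t} := by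
        ext x
        simp only [Set.mem_setOf_eq, Set.mem_diff, not_lt]
        tauto
      have hsub : {x : Fin N → ℝ | Gstat N K x < t} ⊆ {x : Fin N → ℝ | Gstat N K x ≤ d} :=
        fun x hx => (le_trans (le_of_lt (hx : Gstat N K x < t)) hd : Gstat N K x ≤ d)
      have hnm : NullMeasurableSet {x : Fin N → ℝ | Gstat N K x < t} μT :=
        (hGm measurableSet_Iio).nullMeasurableSet
      have hfin : μT {x : Fin N → ℝ | Gstat N K x < t} ≠ ⊤ := by
        rw [hlt]; exact ENNReal.ofReal_ne_top
      have hdiff := measure_diff (μ := μT) hsub hnm hfin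
      rw [hseteq, hdiff]
      rw [hcdf d (le_trans (le_of_lt ht) hd), hlt,
        ← ENNReal.ofReal_sub _ (phi_nonneg hls (le_of_lt ht))]
    · rw [if_neg hd]
      have : {x : Fin N → ℝ | t ≤ Gstat N K x ∧ Gstat N K x ≤ d} = ∅ := by
        ext x
        simp only [Set.mem_setOf_eq, Set.mem_empty_iff_false, iff_false]
        intro hx
        exact hd (le_trans hx.1 hx.2)
      rw [this, measure_empty]
  -- the nonnegative integrand
  set g0 : ℝ → ℝ := fun u =>
    if t ≤ u then ld * Real.exp (-ld * (u - c)) * (phi N K ls c u - phi N K ls c t) else 0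
    with hg0
  have hg0nn : ∀ u, 0 ≤ g0 u := by
    intro u
    simp only [hg0]
    by_cases hu : t ≤ u
    · rw [if_pos hu]
      have h1 := hmono_phi u hu
      have h2 := (Real.exp_pos (-ld * (u - c))).le
      exact mul_nonneg (mul_nonneg hld.le h2) (by linarith)
    · rw [if_neg hu]
  -- compute the product measure of S
  have key : ((shiftedExp ld c).prod μT) S = ENNReal.ofReal (∫ u, g0 u) := by
    rw [Measure.prod_apply hSm]
    rw [lintegral_congr hinner]
    have hgm : Measurable (fun d : ℝ => if t ≤ d then
        ENNReal.ofReal (phi N K ls c d - phi N K ls c t) else 0) := by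
      apply Measurable.ite measurableSet_Ici _ measurable_const
      exact (ENNReal.continuous_ofReal.comp
        (((phi_cont N K hK hKN ls c).sub continuous_const))).measurable
    have hfDm : Measurable (fun u : ℝ =>
        ENNReal.ofReal (if c < u then ld * Real.exp (-ld * (u - c)) else 0)) := by
      apply Measurable.ennreal_ofReal
      apply Measurable.ite measurableSet_Ioi _ measurable_const
      exact (continuous_const.mul (Real.continuous_exp.comp (by continuity))).measurable
    rw [shiftedExp, lintegral_withDensity_eq_lintegral_mul _ hfDm hgm]
    have heq : ∀ u : ℝ,
        ((fun u : ℝ => ENNReal.ofReal (if c < u then ld * Real.exp (-ld * (u - c)) else 0)) *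
          (fun d : ℝ => if t ≤ d then
            ENNReal.ofReal (phi N K ls c d - phi N K ls c t) else 0)) u
        = ENNReal.ofReal (g0 u) := by
      intro u
      simp only [Pi.mul_apply, hg0]
      by_cases hu : t ≤ u
      · rw [if_pos hu, if_pos hu, if_pos (lt_of_lt_of_le ht hu),
          ← ENNReal.ofReal_mul (by positivity)]
      · rw [if_neg hu, if_neg hu, mul_zero, ENNReal.ofReal_zero]
    rw [lintegral_congr heq]
    have hg0int : MeasureTheory.Integrable g0 := by
      have hind : g0 = (Set.Ici t).indicator
          (fun u => ld * Real.exp (-ld * (u - c)) * (phi N K ls c u - phi N K ls c t)) := by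
        funext u
        simp only [hg0, Set.indicator_apply, Set.mem_Ici]
      rw [hind]
      apply MeasureTheory.IntegrableOn.integrable_indicator _ measurableSet_Ici
      rw [integrableOn_Ici_iff_integrableOn_Ioi]
      exact integrand_integrable hK hKN hls hld ht
    rw [← MeasureTheory.ofReal_integral_eq_lintegral_ofReal hg0int
      (Filter.Eventually.of_forall hg0nn)]
  -- finish
  rw [hPE, key, ENNReal.toReal_ofReal (MeasureTheory.integral_nonneg hg0nn)]
  have hind : g0 = (Set.Ici t).indicator
      (fun u => ld * Real.exp (-ld * (u - c)) * (phi N K ls c u - phi N K ls c t)) := by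
    funext u
    simp only [hg0, Set.indicator_apply, Set.mem_Ici]
  rw [hind, MeasureTheory.integral_indicator measurableSet_Ici,
    MeasureTheory.integral_Ici_eq_integral_Ioi]
  exact main_integral hK hKN hls hld ht
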